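/- arXiv:2009.10810 — 3 statements merged into one kernel-verified Lean document; each statement's English description precedes it below -/
import Mathlib

section
/- Let a ∈ ℕ^m and b ∈ ℕ^n be margins with positive entries and equal total sum N = a_1+⋯+a_m = b_1+⋯+b_n, and let W be the m×n matrix with entries W_{ij} = a_i·b_j/N. Then g(W) ≥ log G(a,b). -/
open Real Filter Topology

/-- The function `f(x) = (x+1) log(x+1) - x log x` (note `Real.log 0 = 0`). -/
noncomputable def f (x : ℝ) : ℝ := (x + 1) * Real.log (x + 1) - x * Real.log x

/-- `g(X) = ∑_{i,j} f(X_{ij})`. -/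
noncomputable def g {m n : ℕ} (X : Matrix (Fin m) (Fin n) ℝ) : ℝ :=
  ∑ i, ∑ j, f (X i j)

/-- Contingency tables with row margins `a` and column margins `b`. -/
def contTables {m n : ℕ} (a : Fin m → ℕ) (b : Fin n → ℕ) :
    Set (Matrix (Fin m) (Fin n) ℕ) :=
  {X | (∀ i, ∑ j, X i j = a i) ∧ (∀ j, ∑ i, X i j = b j)}

/-- `T(a,b)`: the number of contingency tables with margins `(a,b)`. -/
noncomputable def T {m n : ℕ} (a : Fin m → ℕ) (b : Fin n → ℕ) : ℕ :=
  (contTables a b).ncard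

/-- `G(a,b)`: the independence-heuristic estimate. -/
noncomputable def G {m n : ℕ} (a : Fin m → ℕ) (b : Fin n → ℕ) : ℝ :=
  (((∑ i, a i) + m * n - 1).choose (m * n - 1) : ℝ)⁻¹ *
    (∏ i, (((a i) + n - 1).choose (n - 1) : ℝ)) *
    (∏ j, (((b j) + m - 1).choose (m - 1) : ℝ))

/-- The transportation polytope `P(a,b)` of real nonnegative matrices with the
given row and column sums. -/
def transPoly {m n : ℕ} (a : Fin m → ℕ) (b : Fin n → ℕ) :
    Set (Matrix (Fin m) (Fin n) ℝ) :=
  {X | (∀ i j, 0 ≤ X i j) ∧ (∀ i, ∑ j, X i j = a i) ∧ (∀ j, ∑ i, X i j = b j)}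

/-- `Z` is a typical table for margins `(a,b)`: it maximizes `g` over `P(a,b)`. -/
def IsTypical {m n : ℕ} (a : Fin m → ℕ) (b : Fin n → ℕ)
    (Z : Matrix (Fin m) (Fin n) ℝ) : Prop :=
  Z ∈ transPoly a b ∧ ∀ X ∈ transPoly a b, g X ≤ g Z

/-- `k = ⌊n^δ⌋`. -/
noncomputable def bk (n : ℕ) (δ : ℝ) : ℕ := ⌊(n : ℝ) ^ δ⌋₊

/-- Barvinok margins: `⌊n^δ⌋` entries equal to `⌊BCn⌋` followed by `n` entries
equal to `⌊Cn⌋`. -/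
noncomputable def bMargin (n : ℕ) (δ B C : ℝ) : Fin (bk n δ + n) → ℕ :=
  fun i => if (i : ℕ) < bk n δ then ⌊B * C * n⌋₊ else ⌊C * n⌋₊

/-- `T_{n,δ}(B,C)`. -/
noncomputable def Tnd (n : ℕ) (δ B C : ℝ) : ℕ :=
  T (bMargin n δ B C) (bMargin n δ B C)

/-- `G_{n,δ}(B,C)`. -/
noncomputable def Gnd (n : ℕ) (δ B C : ℝ) : ℝ :=
  G (bMargin n δ B C) (bMargin n δ B C)



section Aux
open Finset

/-- three-term binomial lower bound: `(p+q)^(p+q) ≥ 2·C(p+q,p)·p^p·q^q` for `p,q ≥ 1`. -/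
lemma nat_L1 (p q : ℕ) (hp : 1 ≤ p) (hq : 1 ≤ q) :
    2 * ((p + q).choose p * p ^ p * q ^ q) ≤ (p + q) ^ (p + q) := by
  set M := p + q with hM
  have hexp : (p + q) ^ M = ∑ j ∈ range (M + 1), p ^ j * q ^ (M - j) * (M.choose j) :=
    add_pow p q M
  set t : ℕ → ℕ := fun j => p ^ j * q ^ (M - j) * (M.choose j) with ht
  have hsub : ({p - 1, p, p + 1} : Finset ℕ) ⊆ range (M + 1) := by
    intro x hx
    simp only [mem_insert, mem_singleton] at hx
    rcases hx with h | h | h <;> simp [mem_range] <;> omega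
  have hsum3 : ∑ j ∈ ({p - 1, p, p + 1} : Finset ℕ), t j ≤ ∑ j ∈ range (M + 1), t j :=
    Finset.sum_le_sum_of_subset hsub
  have hne1 : (p - 1) ∉ ({p, p + 1} : Finset ℕ) := by simp; omega
  have hne2 : p ∉ ({p + 1} : Finset ℕ) := by simp
  have hsum3' : ∑ j ∈ ({p - 1, p, p + 1} : Finset ℕ), t j = t (p - 1) + t p + t (p + 1) := by
    rw [Finset.sum_insert hne1, Finset.sum_insert hne2, Finset.sum_singleton]; ring
  have hpp : p ^ p = p ^ (p - 1) * p := by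
    rw [← pow_succ]; congr 1; omega
  -- 2 * t (p-1) ≥ t p
  have hid1 : (q + 1) * t (p - 1) = q * t p := by
    have h1 : M.choose p * p = M.choose (p - 1) * (q + 1) := by
      have h := Nat.choose_succ_right_eq M (p - 1)
      have hp1 : p - 1 + 1 = p := by omega
      rw [hp1] at h
      rw [h]; congr 1; omega
    have hq1 : M - (p - 1) = (M - p) + 1 := by omega
    calc (q + 1) * t (p - 1) = p ^ (p - 1) * q ^ (M - p) * q * (M.choose (p - 1) * (q + 1)) := by
          simp only [ht, hq1, pow_succ]; ring
      _ = p ^ (p - 1) * q ^ (M - p) * q * (M.choose p * p) := by rw [← h1]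
      _ = q * t p := by simp only [ht, hpp]; ring
  have hid2 : (p + 1) * t (p + 1) = p * t p := by
    have h1 : M.choose (p + 1) * (p + 1) = M.choose p * q := by
      rw [Nat.choose_succ_right_eq M p]; congr 1; omega
    have hq1 : M - p = (M - (p + 1)) + 1 := by omega
    calc (p + 1) * t (p + 1) = p ^ (p + 1) * q ^ (M - (p + 1)) * (M.choose (p + 1) * (p + 1)) := by
          ring
      _ = p ^ (p + 1) * q ^ (M - (p + 1)) * (M.choose p * q) := by rw [h1]
      _ = p * t p := by simp only [ht, hq1, pow_succ]; ring
  have h2a : t p ≤ 2 * t (p - 1) := by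
    have hstep : (q + 1) * t p ≤ (q + 1) * (2 * t (p - 1)) := by
      calc (q + 1) * t p ≤ (2 * q) * t p := Nat.mul_le_mul_right _ (by omega)
        _ = 2 * ((q + 1) * t (p - 1)) := by rw [hid1]; ring
        _ = (q + 1) * (2 * t (p - 1)) := by ring
    exact Nat.le_of_mul_le_mul_left hstep (by omega)
  have h2b : t p ≤ 2 * t (p + 1) := by
    have hstep : (p + 1) * t p ≤ (p + 1) * (2 * t (p + 1)) := by
      calc (p + 1) * t p ≤ (2 * p) * t p := Nat.mul_le_mul_right _ (by omega)
        _ = 2 * ((p + 1) * t (p + 1)) := by rw [hid2]; ring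
        _ = (p + 1) * (2 * t (p + 1)) := by ring
    exact Nat.le_of_mul_le_mul_left hstep (by omega)
  have htp : t p = p ^ p * q ^ q * M.choose p := by
    simp only [ht]; rw [show M - p = q by omega]
  have h4 : 2 * t p ≤ t (p - 1) + t p + t (p + 1) := by omega
  calc 2 * (M.choose p * p ^ p * q ^ q) = 2 * t p := by rw [htp]; ring
    _ ≤ t (p - 1) + t p + t (p + 1) := h4
    _ = ∑ j ∈ ({p - 1, p, p + 1} : Finset ℕ), t j := hsum3'.symm
    _ ≤ ∑ j ∈ range (M + 1), t j := hsum3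
    _ = M ^ M := hexp.symm

/-- max-term upper bound: `(N+q)^(N+q) ≤ (N+q+1)·C(N+q,q)·q^q·N^N`. -/
lemma nat_L2 (N q : ℕ) (hN : 1 ≤ N) (hq : 1 ≤ q) :
    (N + q) ^ (N + q) ≤ (N + q + 1) * ((N + q).choose q * q ^ q * N ^ N) := by
  set M := N + q with hM
  set t : ℕ → ℕ := fun j => q ^ j * N ^ (M - j) * (M.choose j) with ht
  have hqN : q + N = M := by omega
  have hexp : (q + N) ^ M = ∑ j ∈ range (M + 1), t j := add_pow q N M
  rw [hqN] at hexp
  -- identity: (j+1)*N*t(j+1) = (M-j)*q*t(j)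
  have hid : ∀ j, (j + 1) * N * t (j + 1) = (M - j) * q * t j := by
    intro j
    rcases lt_or_ge j M with h | h
    · have h1 : M.choose (j + 1) * (j + 1) = M.choose j * (M - j) := Nat.choose_succ_right_eq M j
      have e1 : N ^ (M - j) = N ^ (M - (j + 1)) * N := by
        rw [← pow_succ]; congr 1; omega
      calc (j + 1) * N * t (j + 1)
          = q ^ (j + 1) * (N ^ (M - (j + 1)) * N) * (M.choose (j + 1) * (j + 1)) := by
            simp only [ht]; ring
        _ = q ^ (j + 1) * (N ^ (M - (j + 1)) * N) * (M.choose j * (M - j)) := by rw [h1]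
        _ = (M - j) * q * t j := by simp only [ht, ← e1, pow_succ]; ring
    · have h1 : M.choose (j + 1) = 0 := Nat.choose_eq_zero_of_lt (by omega)
      have h2 : M - j = 0 := by omega
      simp [ht, h1, h2]
  have hup : ∀ d, t (q + d) ≤ t q := by
    intro d
    induction d with
    | zero => simp
    | succ d ih =>
      have hle : (M - (q + d)) * q ≤ (q + d + 1) * N := by
        have h1 : M - (q + d) ≤ N := by omega
        calc (M - (q + d)) * q ≤ N * q := Nat.mul_le_mul_right _ h1
          _ ≤ N * (q + d + 1) := Nat.mul_le_mul_left _ (by omega)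
          _ = (q + d + 1) * N := by ring
      have hstep : (q + d + 1) * N * t (q + d + 1) ≤ (q + d + 1) * N * t (q + d) := by
        rw [hid (q + d)]
        exact Nat.mul_le_mul_right _ hle
      have step : t (q + d + 1) ≤ t (q + d) :=
        Nat.le_of_mul_le_mul_left hstep (by positivity)
      calc t (q + (d + 1)) = t (q + d + 1) := by rw [Nat.add_assoc]
        _ ≤ t (q + d) := step
        _ ≤ t q := ih
  have hdown : ∀ d, t (q - d) ≤ t q := by
    intro d
    induction d with
    | zero => simp
    | succ d ih =>
      rcases le_or_gt (d + 1) q with h | h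
      · have hj : q - (d + 1) + 1 = q - d := by omega
        have hge : (q - (d + 1) + 1) * N ≤ (M - (q - (d + 1))) * q := by
          have h1 : N + 1 ≤ M - (q - (d + 1)) := by omega
          have h2 : q - (d + 1) + 1 ≤ q := by omega
          calc (q - (d + 1) + 1) * N ≤ q * N := Nat.mul_le_mul_right _ h2
            _ ≤ q * (N + 1) := Nat.mul_le_mul_left _ (by omega)
            _ ≤ q * (M - (q - (d + 1))) := Nat.mul_le_mul_left _ h1
            _ = (M - (q - (d + 1))) * q := by ring
        have hstep : (q - (d + 1) + 1) * N * t (q - (d + 1)) ≤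
            (q - (d + 1) + 1) * N * t (q - (d + 1) + 1) := by
          rw [hid (q - (d + 1))]
          exact Nat.mul_le_mul_right _ hge
        have step : t (q - (d + 1)) ≤ t (q - (d + 1) + 1) :=
          Nat.le_of_mul_le_mul_left hstep (by positivity)
        rw [hj] at step
        exact le_trans step ih
      · have he : q - (d + 1) = q - d := by omega
        rw [he]; exact ih
  have hall : ∀ j, t j ≤ t q := by
    intro j
    rcases le_or_gt j q with h | h
    · have := hdown (q - j); rwa [show q - (q - j) = j by omega] at this
    · have := hup (j - q); rwa [show q + (j - q) = j by omega] at this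
  have htq : t q = M.choose q * q ^ q * N ^ N := by
    simp only [ht]; rw [show M - q = N by omega]; ring
  calc M ^ M = ∑ j ∈ range (M + 1), t j := hexp
    _ ≤ ∑ _j ∈ range (M + 1), t q := Finset.sum_le_sum (fun j _ => hall j)
    _ = (M + 1) * t q := by rw [Finset.sum_const, card_range, smul_eq_mul]
    _ = (M + 1) * (M.choose q * q ^ q * N ^ N) := by rw [htq]


/-- `log C(p+q-1,q-1) = log C(p+q,q) + log q - log (p+q)` -/
lemma logV_shift (p q : ℕ) (hp : 1 ≤ p) (hq : 1 ≤ q) :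
    Real.log ((p + q - 1).choose (q - 1) : ℝ) =
      Real.log ((p + q).choose q : ℝ) + Real.log q - Real.log ((p : ℝ) + q) := by
  have hid : (p + q) * (p + q - 1).choose (q - 1) = (p + q).choose q * q := by
    have h := Nat.add_one_mul_choose_eq (p + q - 1) (q - 1)
    rw [show p + q - 1 + 1 = p + q by omega, show q - 1 + 1 = q by omega] at h
    exact h
  have hC1 : 0 < (p + q - 1).choose (q - 1) := Nat.choose_pos (by omega)
  have hC2 : 0 < (p + q).choose q := Nat.choose_pos (by omega)
  have hidR : ((p : ℝ) + q) * ((p + q - 1).choose (q - 1) : ℝ) =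
      ((p + q).choose q : ℝ) * q := by exact_mod_cast hid
  have h1 : Real.log (((p : ℝ) + q) * ((p + q - 1).choose (q - 1) : ℝ)) =
      Real.log ((p : ℝ) + q) + Real.log ((p + q - 1).choose (q - 1) : ℝ) :=
    Real.log_mul (by positivity) (by exact_mod_cast hC1.ne')
  have h2 : Real.log (((p + q).choose q : ℝ) * q) =
      Real.log ((p + q).choose q : ℝ) + Real.log q :=
    Real.log_mul (by exact_mod_cast hC2.ne') (by exact_mod_cast (by omega : q ≠ 0))
  rw [hidR, h2] at h1
  linarith

lemma logV_upper (p q : ℕ) (hp : 1 ≤ p) (hq : 1 ≤ q) :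
    Real.log ((p + q - 1).choose (q - 1) : ℝ) ≤
      ((p : ℝ) + q) * Real.log ((p : ℝ) + q) - p * Real.log p - q * Real.log q
        - Real.log 2 - Real.log ((p : ℝ) + q) + Real.log q := by
  have hnat : 2 * ((p + q).choose q * p ^ p * q ^ q) ≤ (p + q) ^ (p + q) := by
    rw [← Nat.choose_symm_add]; exact nat_L1 p q hp hq
  have hC2 : 0 < (p + q).choose q := Nat.choose_pos (by omega)
  have hR : (2 : ℝ) * (((p + q).choose q : ℝ) * (p : ℝ) ^ p * (q : ℝ) ^ q) ≤
      ((p : ℝ) + q) ^ (p + q) := by exact_mod_cast hnat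
  have hpos : (0 : ℝ) < 2 * (((p + q).choose q : ℝ) * (p : ℝ) ^ p * (q : ℝ) ^ q) := by
    have : (0:ℝ) < ((p + q).choose q : ℝ) := by exact_mod_cast hC2
    have hp' : (0:ℝ) < (p:ℝ) := by exact_mod_cast hp
    have hq' : (0:ℝ) < (q:ℝ) := by exact_mod_cast hq
    positivity
  have hlog := Real.log_le_log hpos hR
  rw [Real.log_pow] at hlog
  have hexp : Real.log (2 * (((p + q).choose q : ℝ) * (p : ℝ) ^ p * (q : ℝ) ^ q)) =
      Real.log 2 + Real.log ((p + q).choose q : ℝ) + p * Real.log p + q * Real.log q := by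
    have hC2' : ((p + q).choose q : ℝ) ≠ 0 := by exact_mod_cast hC2.ne'
    have hp' : ((p:ℝ)) ≠ 0 := by exact_mod_cast (by omega : p ≠ 0)
    have hq' : ((q:ℝ)) ≠ 0 := by exact_mod_cast (by omega : q ≠ 0)
    rw [Real.log_mul (by norm_num) (by positivity), Real.log_mul (by positivity) (by positivity),
      Real.log_mul hC2' (by positivity), Real.log_pow, Real.log_pow]
    ring
  rw [hexp] at hlog
  rw [logV_shift p q hp hq]
  push_cast at hlog ⊢
  linarith

lemma logV_lower (N q : ℕ) (hN : 1 ≤ N) (hq : 1 ≤ q) :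
    ((N : ℝ) + q) * Real.log ((N : ℝ) + q) - N * Real.log N - q * Real.log q
        - Real.log ((N : ℝ) + q + 1) - Real.log ((N : ℝ) + q) + Real.log q ≤
      Real.log ((N + q - 1).choose (q - 1) : ℝ) := by
  have hnat := nat_L2 N q hN hq
  have hC2 : 0 < (N + q).choose q := Nat.choose_pos (by omega)
  have hR : ((N : ℝ) + q) ^ (N + q) ≤
      ((N : ℝ) + q + 1) * (((N + q).choose q : ℝ) * (q : ℝ) ^ q * (N : ℝ) ^ N) := by
    exact_mod_cast hnat
  have hpos : (0 : ℝ) < ((N : ℝ) + q) ^ (N + q) := by positivity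
  have hlog := Real.log_le_log hpos hR
  rw [Real.log_pow] at hlog
  have hC2' : ((N + q).choose q : ℝ) ≠ 0 := by exact_mod_cast hC2.ne'
  have hN' : ((N:ℝ)) ≠ 0 := by exact_mod_cast (by omega : N ≠ 0)
  have hq' : ((q:ℝ)) ≠ 0 := by exact_mod_cast (by omega : q ≠ 0)
  have hexp : Real.log (((N : ℝ) + q + 1) * (((N + q).choose q : ℝ) * (q : ℝ) ^ q * (N : ℝ) ^ N)) =
      Real.log ((N : ℝ) + q + 1) + Real.log ((N + q).choose q : ℝ)
        + q * Real.log q + N * Real.log N := by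
    rw [Real.log_mul (by positivity) (by positivity), Real.log_mul (by positivity) (by positivity),
      Real.log_mul hC2' (by positivity), Real.log_pow, Real.log_pow]
    ring
  rw [hexp] at hlog
  rw [logV_shift N q hN hq]
  push_cast at hlog ⊢
  linarith


noncomputable def f1 (x : ℝ) : ℝ := Real.log (x + 1) - Real.log x
noncomputable def f2 (x : ℝ) : ℝ := 1 / (x + 1) - 1 / x

lemma hasDerivAt_f {x : ℝ} (hx : 0 < x) : HasDerivAt f (f1 x) x := by
  have h1 : HasDerivAt (fun y : ℝ => y + 1) 1 x := (hasDerivAt_id x).add_const 1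
  have hlog1 : HasDerivAt (fun y : ℝ => Real.log (y + 1)) (1 / (x + 1)) x := by
    have := (Real.hasDerivAt_log (by positivity : x + 1 ≠ 0)).comp x h1
    simpa [Function.comp_def] using this
  have hA : HasDerivAt (fun y : ℝ => (y + 1) * Real.log (y + 1))
      (1 * Real.log (x + 1) + (x + 1) * (1 / (x + 1))) x := h1.mul hlog1
  have hB : HasDerivAt (fun y : ℝ => y * Real.log y)
      (1 * Real.log x + x * (1 / x)) x := by
    have hl : HasDerivAt Real.log (1 / x) x := by
      simpa [one_div] using Real.hasDerivAt_log hx.ne'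
    exact (hasDerivAt_id x).mul hl
  have := hA.sub hB
  exact this.congr_deriv (by
    unfold f1
    rw [mul_one_div_cancel (by positivity), mul_one_div_cancel hx.ne']; ring)

lemma hasDerivAt_f1 {x : ℝ} (hx : 0 < x) : HasDerivAt f1 (f2 x) x := by
  have h1 : HasDerivAt (fun y : ℝ => y + 1) 1 x := (hasDerivAt_id x).add_const 1
  have hlog1 : HasDerivAt (fun y : ℝ => Real.log (y + 1)) (1 / (x + 1)) x := by
    have := (Real.hasDerivAt_log (by positivity : x + 1 ≠ 0)).comp x h1
    simpa [Function.comp_def] using this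
  have hlog2 : HasDerivAt Real.log (1 / x) x := by
    simpa [one_div] using Real.hasDerivAt_log hx.ne'
  have := hlog1.sub hlog2
  exact this

lemma f_nonneg {x : ℝ} (hx : 0 ≤ x) : 0 ≤ f x := by
  unfold f
  rcases le_or_gt x 1 with h | h
  · have h1 : 0 ≤ (x + 1) * Real.log (x + 1) := by
      apply mul_nonneg (by linarith)
      exact Real.log_nonneg (by linarith)
    have h2 : x * Real.log x ≤ 0 := by
      rcases eq_or_lt_of_le hx with h' | h'
      · simp [← h']
      · exact mul_nonpos_of_nonneg_of_nonpos (le_of_lt h') (Real.log_nonpos (by linarith) h)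
    linarith
  · have h2 : x * Real.log x ≤ (x + 1) * Real.log (x + 1) := by
      apply mul_le_mul (by linarith) (Real.log_le_log (by linarith) (by linarith))
        (Real.log_nonneg (by linarith)) (by linarith)
    linarith

section Psi

noncomputable def psi (n : ℕ) (c : Fin n → ℝ) (x : ℝ) : ℝ :=
  (∑ j, f (x * c j)) - n * f (x / n)

noncomputable def psi' (n : ℕ) (c : Fin n → ℝ) (x : ℝ) : ℝ :=
  (∑ j, c j * f1 (x * c j)) - f1 (x / n)

noncomputable def psi'' (n : ℕ) (c : Fin n → ℝ) (x : ℝ) : ℝ :=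
  (∑ j, (c j) ^ 2 * f2 (x * c j)) - (1 / n) * f2 (x / n)

lemma hasDerivAt_psi {n : ℕ} (hn : 1 ≤ n) (c : Fin n → ℝ) (hc : ∀ j, 0 < c j) {x : ℝ} (hx : 0 < x) : HasDerivAt (psi n c) (psi' n c x) x := by
  have hn' : (0 : ℝ) < n := by exact_mod_cast hn
  have hsum : HasDerivAt (fun y : ℝ => ∑ j, f (y * c j)) (∑ j, c j * f1 (x * c j)) x := by
    apply HasDerivAt.fun_sum
    intro j _
    have hin : HasDerivAt (fun y : ℝ => y * c j) (c j) x := by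
      simpa using (hasDerivAt_id x).mul_const (c j)
    have := (hasDerivAt_f (mul_pos hx (hc j))).comp x hin
    exact this.congr_deriv (mul_comm _ _)
  have hin2 : HasDerivAt (fun y : ℝ => y / (n : ℝ)) (1 / n) x := by
    simpa using (hasDerivAt_id x).div_const (n : ℝ)
  have h2 : HasDerivAt (fun y : ℝ => (n : ℝ) * f (y / n)) (f1 (x / n)) x := by
    have := ((hasDerivAt_f (by positivity : (0:ℝ) < x / n)).comp x hin2).const_mul (n : ℝ)
    exact this.congr_deriv (by rw [mul_comm (f1 _), ← mul_assoc, mul_one_div_cancel hn'.ne', one_mul])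
  exact hsum.sub h2

lemma hasDerivAt_psi' {n : ℕ} (hn : 1 ≤ n) (c : Fin n → ℝ) (hc : ∀ j, 0 < c j) {x : ℝ} (hx : 0 < x) : HasDerivAt (psi' n c) (psi'' n c x) x := by
  have hn' : (0 : ℝ) < n := by exact_mod_cast hn
  have hsum : HasDerivAt (fun y : ℝ => ∑ j, c j * f1 (y * c j)) (∑ j, (c j) ^ 2 * f2 (x * c j)) x := by
    apply HasDerivAt.fun_sum
    intro j _
    have hin : HasDerivAt (fun y : ℝ => y * c j) (c j) x := by
      simpa using (hasDerivAt_id x).mul_const (c j)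
    have := ((hasDerivAt_f1 (mul_pos hx (hc j))).comp x hin).const_mul (c j)
    exact this.congr_deriv (by ring)
  have hin2 : HasDerivAt (fun y : ℝ => y / (n : ℝ)) (1 / n) x := by
    simpa using (hasDerivAt_id x).div_const (n : ℝ)
  have h2 : HasDerivAt (fun y : ℝ => f1 (y / n)) ((1 / n) * f2 (x / n)) x := by
    have := (hasDerivAt_f1 (by positivity : (0:ℝ) < x / n)).comp x hin2
    exact this.congr_deriv (mul_comm _ _)
  exact hsum.sub h2

lemma psi''_nonneg {n : ℕ} (hn : 1 ≤ n) (c : Fin n → ℝ) (hc : ∀ j, 0 < c j) (hsc : ∑ j, c j = 1) {x : ℝ} (hx : 0 < x) : 0 ≤ psi'' n c x := by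
  have hn' : (0 : ℝ) < n := by exact_mod_cast hn
  have hxn : (0 : ℝ) < x + n := by positivity
  -- rewrite psi''
  have hterm : ∀ j, (c j) ^ 2 * f2 (x * c j) = (c j) ^ 2 / (x * c j + 1) - c j / x := by
    intro j
    have h1 : (0:ℝ) < c j := hc j
    unfold f2
    field_simp
  have hpart2 : (1 / (n:ℝ)) * f2 (x / n) = 1 / (x + n) - 1 / x := by
    unfold f2
    rw [div_add' _ _ _ (by positivity : (n:ℝ) ≠ 0)]
    field_simp
  have hpsi : psi'' n c x = (∑ j, (c j) ^ 2 / (x * c j + 1)) - 1 / (x + n) := by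
    unfold psi''
    rw [hpart2]
    rw [Finset.sum_congr rfl (fun j _ => hterm j), Finset.sum_sub_distrib]
    have : ∑ j, c j / x = 1 / x := by
      rw [← Finset.sum_div, hsc]
    rw [this]
    ring
  rw [hpsi]
  -- tangent line trick: c²/(xc+1) ≥ 2c/(x+n) - (xc+1)/(x+n)²
  have key : ∀ j : Fin n, 2 * (c j) / (x + n) - (x * c j + 1) / ((x + n) ^ 2) ≤
      (c j) ^ 2 / (x * c j + 1) := by
    intro j
    have h1 : (0:ℝ) < c j := hc j
    have hb : (0:ℝ) < x * c j + 1 := by positivity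
    rw [← sub_nonneg]
    have hsq := sq_nonneg ((c j) * (x + n) - (x * c j + 1))
    have expand : (c j) ^ 2 / (x * c j + 1) - (2 * (c j) / (x + n) - (x * c j + 1) / ((x + n) ^ 2)) =
        ((c j) * (x + n) - (x * c j + 1)) ^ 2 / ((x * c j + 1) * (x + n) ^ 2) := by
      field_simp
      ring
    rw [expand]
    positivity
  have hsum := Finset.sum_le_sum (fun j (_ : j ∈ Finset.univ) => key j)
  have hL : ∑ j, (2 * (c j) / (x + n) - (x * c j + 1) / ((x + n) ^ 2)) = 1 / (x + n) := by
    rw [Finset.sum_sub_distrib]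
    have h1 : ∑ j, 2 * (c j) / (x + n) = 2 / (x + n) := by
      rw [← Finset.sum_div, ← Finset.mul_sum, hsc, mul_one]
    have h2 : ∑ j, (x * c j + 1) / ((x + n) ^ 2) = (x + n) / ((x + n) ^ 2) := by
      rw [← Finset.sum_div]
      congr 1
      rw [Finset.sum_add_distrib, ← Finset.mul_sum, hsc, mul_one, Finset.sum_const,
        Finset.card_univ, Fintype.card_fin, nsmul_eq_mul, mul_one]
    rw [h1, h2]
    rw [pow_two]
    rw [div_mul_eq_div_div, div_self hxn.ne']
    ring
  rw [hL] at hsum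
  linarith

lemma psi_convexOn {n : ℕ} (hn : 1 ≤ n) (c : Fin n → ℝ) (hc : ∀ j, 0 < c j) (hsc : ∑ j, c j = 1) : ConvexOn ℝ (Set.Ioi 0) (psi n c) := by
  have hderiv1 : ∀ x ∈ Set.Ioi (0:ℝ), deriv (psi n c) x = psi' n c x :=
    fun x hx => (hasDerivAt_psi hn c hc hx).deriv
  apply convexOn_of_deriv2_nonneg (convex_Ioi 0)
  · intro x hx
    exact (hasDerivAt_psi hn c hc hx).continuousAt.continuousWithinAt
  · rw [interior_Ioi]
    exact fun x hx => (hasDerivAt_psi hn c hc hx).differentiableAt.differentiableWithinAt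
  · rw [interior_Ioi]
    intro x hx
    have hev : deriv (psi n c) =ᶠ[nhds x] psi' n c :=
      Filter.eventuallyEq_of_mem (isOpen_Ioi.mem_nhds hx) hderiv1
    exact ((hasDerivAt_psi' hn c hc hx).differentiableAt.congr_of_eventuallyEq hev).differentiableWithinAt
  · rw [interior_Ioi]
    intro x hx
    have hev : deriv (psi n c) =ᶠ[nhds x] psi' n c :=
      Filter.eventuallyEq_of_mem (isOpen_Ioi.mem_nhds hx) hderiv1
    have h2 : deriv (deriv (psi n c)) x = psi'' n c x := by
      rw [hev.deriv_eq]
      exact (hasDerivAt_psi' hn c hc hx).deriv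
    have hit : deriv^[2] (psi n c) x = deriv (deriv (psi n c)) x := rfl
    rw [hit, h2]
    exact psi''_nonneg hn c hc hsc hx

end Psi

lemma nf_eq (p q : ℝ) (hp : 0 < p) (hq : 0 < q) :
    q * f (p / q) = (p + q) * Real.log (p + q) - p * Real.log p - q * Real.log q := by
  unfold f
  have h1 : p / q + 1 = (p + q) / q := by field_simp
  rw [h1, Real.log_div (by positivity) hq.ne', Real.log_div hp.ne' hq.ne']
  field_simp
  ring

lemma L3 (m n : ℕ) (hm : 1 ≤ m) (hn : 1 ≤ n) (a : Fin m → ℝ) (b : Fin n → ℝ)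
    (hapos : ∀ i, 0 < a i) (hbpos : ∀ j, 0 < b j) (hab : ∑ i, a i = ∑ j, b j) :
    (∑ i, ((a i + n) * Real.log (a i + n) - a i * Real.log (a i) - n * Real.log n)) +
    (∑ j, ((b j + m) * Real.log (b j + m) - b j * Real.log (b j) - m * Real.log m)) ≤
    ((∑ i, a i) + m * n) * Real.log ((∑ i, a i) + m * n) - (∑ i, a i) * Real.log (∑ i, a i)
      - (m * n) * Real.log ((m : ℝ) * n) + ∑ i, ∑ j, f (a i * b j / (∑ i, a i)) := by
  have hm' : (0 : ℝ) < m := by exact_mod_cast hm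
  have hn' : (0 : ℝ) < n := by exact_mod_cast hn
  set N := ∑ i, a i with hNdef
  have hN : 0 < N := Finset.sum_pos (fun i _ => hapos i) ⟨⟨0, hm⟩, Finset.mem_univ _⟩
  set c : Fin n → ℝ := fun j => b j / N with hcdef
  have hc : ∀ j, 0 < c j := fun j => div_pos (hbpos j) hN
  have hsc : ∑ j, c j = 1 := by
    rw [hcdef, ← Finset.sum_div, ← hab, div_self hN.ne']
  have hconv := psi_convexOn hn c hc hsc
  -- Jensen with equal weights
  have hw : ∑ _i : Fin m, (1 : ℝ) / m = 1 := by
    rw [Finset.sum_const, Finset.card_univ, Fintype.card_fin, nsmul_eq_mul]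
    field_simp
  have hjen := hconv.map_sum_le (t := Finset.univ) (w := fun _ => (1:ℝ)/m) (p := a)
    (fun i _ => by positivity) hw (fun i _ => hapos i)
  have hsum_eq : ∑ i, ((1:ℝ)/m) • a i = N / m := by
    simp only [smul_eq_mul]
    rw [← Finset.mul_sum, ← hNdef]
    ring
  rw [hsum_eq] at hjen
  have hjen2 : (m : ℝ) * psi n c (N / m) ≤ ∑ i, psi n c (a i) := by
    have h2 : ∑ i, ((1:ℝ)/m) • psi n c (a i) = (1/m) * ∑ i, psi n c (a i) := by
      simp only [smul_eq_mul]
      rw [← Finset.mul_sum]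
    rw [h2] at hjen
    calc (m : ℝ) * psi n c (N / m) ≤ m * ((1/m) * ∑ i, psi n c (a i)) := by
          apply mul_le_mul_of_nonneg_left hjen (le_of_lt hm')
      _ = ∑ i, psi n c (a i) := by field_simp
  -- unfold psi
  have hL : (m : ℝ) * psi n c (N / m) =
      (∑ j, (m : ℝ) * f (b j / m)) - ((m : ℝ) * n) * f (N / ((m : ℝ) * n)) := by
    unfold psi
    have h1 : ∀ j, (N / m) * c j = b j / m := by
      intro j
      rw [hcdef]
      field_simp
    rw [Finset.sum_congr rfl (fun j _ => by rw [h1 j])]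
    have h2 : N / (m : ℝ) / n = N / ((m : ℝ) * n) := by
      rw [div_div]
    rw [h2, mul_sub, Finset.mul_sum]
    ring
  have hR : ∑ i, psi n c (a i) =
      (∑ i, ∑ j, f (a i * b j / N)) - ∑ i, (n : ℝ) * f (a i / n) := by
    unfold psi
    rw [← Finset.sum_sub_distrib]
    apply Finset.sum_congr rfl
    intro i _
    congr 1
    apply Finset.sum_congr rfl
    intro j _
    congr 1
    rw [hcdef]
    field_simp
  rw [hL, hR] at hjen2
  -- rewrite via nf_eq
  have e1 : ∑ i, (n : ℝ) * f (a i / n) =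
      ∑ i, ((a i + n) * Real.log (a i + n) - a i * Real.log (a i) - n * Real.log n) :=
    Finset.sum_congr rfl (fun i _ => nf_eq (a i) n (hapos i) hn')
  have e2 : ∑ j, (m : ℝ) * f (b j / m) =
      ∑ j, ((b j + m) * Real.log (b j + m) - b j * Real.log (b j) - m * Real.log m) :=
    Finset.sum_congr rfl (fun j _ => nf_eq (b j) m (hbpos j) hm')
  have e3 : ((m : ℝ) * n) * f (N / ((m : ℝ) * n)) =
      (N + m * n) * Real.log (N + m * n) - N * Real.log N - (m * n) * Real.log ((m:ℝ) * n) :=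
    nf_eq N ((m : ℝ) * n) hN (by positivity)
  rw [e1, e2, e3] at hjen2
  linarith

lemma nat_prod_fin (n : ℕ) {ι : Type*} (s : Finset ι) (hs : s.Nonempty) (a : ι → ℕ) :
    n ^ (s.card - 1) * ((∑ i ∈ s, a i) + n) ≤ ∏ i ∈ s, (a i + n) := by
  induction hs using Finset.Nonempty.cons_induction with
  | singleton i => simp
  | cons i s hi hs ih =>
    rw [Finset.prod_cons, Finset.sum_cons, Finset.card_cons]
    have hc1 : 1 ≤ s.card := Finset.Nonempty.card_pos hs
    have key : n * ((a i + ∑ x ∈ s, a x) + n) ≤ (a i + n) * ((∑ x ∈ s, a x) + n) := by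
      nlinarith [Nat.zero_le (a i * ∑ x ∈ s, a x)]
    calc n ^ (s.card + 1 - 1) * ((a i + ∑ x ∈ s, a x) + n)
        = n ^ (s.card - 1) * (n * ((a i + ∑ x ∈ s, a x) + n)) := by
          rw [show s.card + 1 - 1 = (s.card - 1) + 1 by omega, pow_succ]; ring
      _ ≤ n ^ (s.card - 1) * ((a i + n) * ((∑ x ∈ s, a x) + n)) :=
          Nat.mul_le_mul_left _ key
      _ = (a i + n) * (n ^ (s.card - 1) * ((∑ x ∈ s, a x) + n)) := by ring
      _ ≤ (a i + n) * ∏ x ∈ s, (a x + n) := Nat.mul_le_mul_left _ ih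

lemma nat_2pow (m n N : ℕ) (hm : 1 ≤ m) (hn : 1 ≤ n) :
    m * (N + m * n + 1) ≤ 2 ^ (m + n) * (N + m) := by
  have h1 : m < 2 ^ m := Nat.lt_two_pow_self
  have h2 : n < 2 ^ n := Nat.lt_two_pow_self
  have hp : 2 ^ (m + n) = 2 ^ m * 2 ^ n := pow_add 2 m n
  have h1' : 1 ≤ 2 ^ m := Nat.one_le_two_pow
  have h2' : 1 ≤ 2 ^ n := Nat.one_le_two_pow
  have key1 : m * n + 1 ≤ 2 ^ (m + n) := by nlinarith
  have key2 : m ≤ 2 ^ (m + n) := by nlinarith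
  calc m * (N + m * n + 1) = m * N + m * (m * n + 1) := by ring
    _ ≤ 2 ^ (m + n) * N + 2 ^ (m + n) * m := by
        have e1 : m * N ≤ 2 ^ (m + n) * N := Nat.mul_le_mul_right N key2
        have e2 : m * (m * n + 1) ≤ 2 ^ (m + n) * m := by
          calc m * (m * n + 1) ≤ m * 2 ^ (m + n) := Nat.mul_le_mul_left m key1
            _ = 2 ^ (m + n) * m := mul_comm _ _
        exact Nat.add_le_add e1 e2
    _ = 2 ^ (m + n) * (N + m) := by ring

lemma nat_7a (m n N : ℕ) (hm : 1 ≤ m) : n * (N + m * n) ≤ (m * n) * (N + n) := by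
  have h1 : n * N ≤ (m * n) * N := Nat.mul_le_mul_right N (Nat.le_mul_of_pos_left n hm)
  calc n * (N + m * n) = n * N + (m * n) * n := by ring
    _ ≤ (m * n) * N + (m * n) * n := by omega
    _ = (m * n) * (N + n) := by ring

end Aux

/-- for the independence matrix `W_{ij} = a_i b_j / N`, we have
`g(W) ≥ log G(a,b)`. -/
theorem statement14 (m n : ℕ) (a : Fin m → ℕ) (b : Fin n → ℕ)
    (ha : ∀ i, 0 < a i) (hb : ∀ j, 0 < b j)
    (hsum : (∑ i, a i) = (∑ j, b j)) :
    Real.log (G a b) ≤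
      g (Matrix.of fun i j => (a i : ℝ) * (b j : ℝ) / ((∑ i, a i : ℕ) : ℝ)) := by
  by_cases hm0 : m = 0
  · subst hm0
    by_cases hn0 : n = 0
    · subst hn0
      simp [G, g]
    · exfalso
      have h1 : 0 < ∑ j, b j := Finset.sum_pos (fun j _ => hb j)
        ⟨⟨0, Nat.pos_of_ne_zero hn0⟩, Finset.mem_univ _⟩
      rw [← hsum] at h1
      simp at h1
  by_cases hn0 : n = 0
  · exfalso
    have h1 : 0 < ∑ i, a i := Finset.sum_pos (fun i _ => ha i)
      ⟨⟨0, Nat.pos_of_ne_zero hm0⟩, Finset.mem_univ _⟩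
    rw [hsum] at h1
    subst hn0
    simp at h1
  have hm : 1 ≤ m := Nat.one_le_iff_ne_zero.2 hm0
  have hn : 1 ≤ n := Nat.one_le_iff_ne_zero.2 hn0
  set N : ℕ := ∑ i, a i with hNdef
  have hN1 : 1 ≤ N := by
    have h1 : 0 < ∑ i, a i := Finset.sum_pos (fun i _ => ha i) ⟨⟨0, hm⟩, Finset.mem_univ _⟩
    omega
  have hq1 : 1 ≤ m * n := Nat.one_le_iff_ne_zero.2 (Nat.mul_ne_zero hm0 hn0)
  -- nonvanishing of the binomials
  have hVa : ∀ i : Fin m, (((a i + n - 1).choose (n - 1) : ℕ) : ℝ) ≠ 0 := by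
    intro i
    have h : 0 < (a i + n - 1).choose (n - 1) := Nat.choose_pos (by omega)
    exact_mod_cast h.ne'
  have hVb : ∀ j : Fin n, (((b j + m - 1).choose (m - 1) : ℕ) : ℝ) ≠ 0 := by
    intro j
    have h : 0 < (b j + m - 1).choose (m - 1) := Nat.choose_pos (by omega)
    exact_mod_cast h.ne'
  have hVN : (((N + m * n - 1).choose (m * n - 1) : ℕ) : ℝ) ≠ 0 := by
    have h : 0 < (N + m * n - 1).choose (m * n - 1) := Nat.choose_pos (by omega)
    exact_mod_cast h.ne'
  -- expand log G
  have hG : Real.log (G a b) =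
      (∑ i, Real.log (((a i + n - 1).choose (n - 1) : ℕ) : ℝ)) +
      (∑ j, Real.log (((b j + m - 1).choose (m - 1) : ℕ) : ℝ)) -
      Real.log (((N + m * n - 1).choose (m * n - 1) : ℕ) : ℝ) := by
    unfold G
    rw [← hNdef]
    rw [Real.log_mul (mul_ne_zero (inv_ne_zero hVN) (Finset.prod_ne_zero_iff.2 (fun i _ => hVa i)))
        (Finset.prod_ne_zero_iff.2 (fun j _ => hVb j)),
      Real.log_mul (inv_ne_zero hVN) (Finset.prod_ne_zero_iff.2 (fun i _ => hVa i)),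
      Real.log_inv,
      Real.log_prod (fun i _ => hVa i), Real.log_prod (fun j _ => hVb j)]
    ring
  rw [hG]
  have hgW : g (Matrix.of fun i j => (a i : ℝ) * (b j : ℝ) / (N : ℝ)) =
      ∑ i, ∑ j, f ((a i : ℝ) * (b j : ℝ) / (N : ℝ)) := rfl
  rw [hgW]
  -- row and column upper bounds
  have hSa : ∑ i, Real.log (((a i + n - 1).choose (n - 1) : ℕ) : ℝ) ≤
      ∑ i, (((a i : ℝ) + n) * Real.log ((a i : ℝ) + n) - (a i : ℝ) * Real.log (a i : ℝ)
        - (n : ℝ) * Real.log n - Real.log 2 - Real.log ((a i : ℝ) + n) + Real.log n) :=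
    Finset.sum_le_sum (fun i _ => logV_upper (a i) n (ha i) hn)
  have hSb : ∑ j, Real.log (((b j + m - 1).choose (m - 1) : ℕ) : ℝ) ≤
      ∑ j, (((b j : ℝ) + m) * Real.log ((b j : ℝ) + m) - (b j : ℝ) * Real.log (b j : ℝ)
        - (m : ℝ) * Real.log m - Real.log 2 - Real.log ((b j : ℝ) + m) + Real.log m) :=
    Finset.sum_le_sum (fun j _ => logV_upper (b j) m (hb j) hm)
  have hlower := logV_lower N (m * n) hN1 hq1
  push_cast at hlower
  -- L3
  have hab : (∑ i, ((a i : ℕ) : ℝ)) = ∑ j, ((b j : ℕ) : ℝ) := by exact_mod_cast hsum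
  have hL3 := L3 m n hm hn (fun i => ((a i : ℕ) : ℝ)) (fun j => ((b j : ℕ) : ℝ))
    (fun i => by show (0:ℝ) < ((a i : ℕ) : ℝ); exact_mod_cast ha i)
    (fun j => by show (0:ℝ) < ((b j : ℕ) : ℝ); exact_mod_cast hb j) hab
  have hNc : (∑ i, ((a i : ℕ) : ℝ)) = ((N : ℕ) : ℝ) := by
    rw [hNdef]; push_cast; rfl
  rw [hNc] at hL3
  -- distribute the sums
  simp only [Finset.sum_add_distrib, Finset.sum_sub_distrib, Finset.sum_const,
    Finset.card_univ, Fintype.card_fin, nsmul_eq_mul] at hSa hSb hL3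
  -- product lower bounds
  have hprodA : Real.log ((N : ℝ) + n) + (m : ℝ) * Real.log n - Real.log n ≤
      ∑ i, Real.log ((a i : ℝ) + n) := by
    have hnp := nat_prod_fin n (Finset.univ : Finset (Fin m)) ⟨⟨0, hm⟩, Finset.mem_univ _⟩ a
    rw [Finset.card_univ, Fintype.card_fin, ← hNdef] at hnp
    have hR : ((n : ℝ)) ^ (m - 1) * ((N : ℝ) + n) ≤ ∏ i, ((a i : ℝ) + n) := by
      exact_mod_cast hnp
    have hposL : (0 : ℝ) < ((n : ℝ)) ^ (m - 1) * ((N : ℝ) + n) := by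
      have : (0:ℝ) < (n:ℝ) := by exact_mod_cast hn
      have : (0:ℝ) < (N:ℝ) := by exact_mod_cast hN1
      positivity
    have hlog := Real.log_le_log hposL hR
    rw [Real.log_prod (fun i _ => by
        have : (0:ℝ) < (a i : ℝ) := by exact_mod_cast ha i
        have : (0:ℝ) < (n:ℝ) := by exact_mod_cast hn
        positivity)] at hlog
    rw [Real.log_mul (by positivity) (by
        have : (0:ℝ) < (N:ℝ) := by exact_mod_cast hN1
        have : (0:ℝ) < (n:ℝ) := by exact_mod_cast hn
        positivity), Real.log_pow, Nat.cast_sub hm] at hlog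
    push_cast at hlog
    linarith
  have hprodB : Real.log ((N : ℝ) + m) + (n : ℝ) * Real.log m - Real.log m ≤
      ∑ j, Real.log ((b j : ℝ) + m) := by
    have hnp := nat_prod_fin m (Finset.univ : Finset (Fin n)) ⟨⟨0, hn⟩, Finset.mem_univ _⟩ b
    rw [Finset.card_univ, Fintype.card_fin, ← hsum] at hnp
    have hR : ((m : ℝ)) ^ (n - 1) * ((N : ℝ) + m) ≤ ∏ j, ((b j : ℝ) + m) := by
      exact_mod_cast hnp
    have hposL : (0 : ℝ) < ((m : ℝ)) ^ (n - 1) * ((N : ℝ) + m) := by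
      have : (0:ℝ) < (m:ℝ) := by exact_mod_cast hm
      have : (0:ℝ) < (N:ℝ) := by exact_mod_cast hN1
      positivity
    have hlog := Real.log_le_log hposL hR
    rw [Real.log_prod (fun j _ => by
        have : (0:ℝ) < (b j : ℝ) := by exact_mod_cast hb j
        have : (0:ℝ) < (m:ℝ) := by exact_mod_cast hm
        positivity)] at hlog
    rw [Real.log_mul (by positivity) (by
        have : (0:ℝ) < (N:ℝ) := by exact_mod_cast hN1
        have : (0:ℝ) < (m:ℝ) := by exact_mod_cast hm
        positivity), Real.log_pow, Nat.cast_sub hn] at hlog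
    push_cast at hlog
    linarith
  -- arithmetic comparisons
  have h7a : Real.log ((n : ℝ)) + Real.log ((N : ℝ) + (m : ℝ) * n) ≤
      Real.log ((m : ℝ) * n) + Real.log ((N : ℝ) + n) := by
    have hnat := nat_7a m n N hm
    have hR : (n : ℝ) * ((N : ℝ) + (m : ℝ) * n) ≤ ((m : ℝ) * n) * ((N : ℝ) + n) := by
      exact_mod_cast hnat
    have hposL : (0:ℝ) < (n : ℝ) * ((N : ℝ) + (m : ℝ) * n) := by
      have : (0:ℝ) < (n:ℝ) := by exact_mod_cast hn
      have : (0:ℝ) < (m:ℝ) := by exact_mod_cast hm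
      have : (0:ℝ) < (N:ℝ) := by exact_mod_cast hN1
      positivity
    have hlog := Real.log_le_log hposL hR
    have h1 : (0:ℝ) < (n:ℝ) := by exact_mod_cast hn
    have h2 : (0:ℝ) < (m:ℝ) := by exact_mod_cast hm
    have h3 : (0:ℝ) < (N:ℝ) := by exact_mod_cast hN1
    rw [Real.log_mul (by positivity) (by positivity),
      Real.log_mul (by positivity) (by positivity)] at hlog
    linarith
  have h7b : Real.log ((N : ℝ) + (m : ℝ) * n + 1) ≤
      (m : ℝ) * Real.log 2 + (n : ℝ) * Real.log 2 + Real.log ((N : ℝ) + m) - Real.log m := by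
    have hnat := nat_2pow m n N hm hn
    have hR : (m : ℝ) * ((N : ℝ) + (m : ℝ) * n + 1) ≤
        (2 : ℝ) ^ (m + n) * ((N : ℝ) + m) := by exact_mod_cast hnat
    have h1 : (0:ℝ) < (n:ℝ) := by exact_mod_cast hn
    have h2 : (0:ℝ) < (m:ℝ) := by exact_mod_cast hm
    have h3 : (0:ℝ) < (N:ℝ) := by exact_mod_cast hN1
    have hposL : (0:ℝ) < (m : ℝ) * ((N : ℝ) + (m : ℝ) * n + 1) := by positivity
    have hlog := Real.log_le_log hposL hR
    rw [Real.log_mul (by positivity) (by positivity),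
      Real.log_mul (by positivity) (by positivity), Real.log_pow] at hlog
    push_cast at hlog
    have he : ((m : ℝ) + n) * Real.log 2 = (m : ℝ) * Real.log 2 + (n : ℝ) * Real.log 2 := by
      ring
    linarith
  linarith [hSa, hSb, hlower, hL3, hprodA, hprodB, h7a, h7b]
end

section
/- Fix C > 0 and set B_c := 1+√(1+1/C). Define λ(B) := C(B−B_c)·log(1+1/C) − 2(f(BC) − f(B_c·C)) for B > 0. Then λ is differentiable on (0,∞) with λ'(B) = C·log(1+1/C) − 2C·log(1+1/(BC)); moreover λ'(B) > 0 if and only if B > B_c, λ(B_c) = 0, and consequently λ(B) > 0 for every B > B_c. -/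
open Real Filter Topology

lemma f_hasDerivAt {x : ℝ} (hx : 0 < x) :
    HasDerivAt f (Real.log (x + 1) - Real.log x) x := by
  have h1 : HasDerivAt (fun y : ℝ => (y + 1) * Real.log (y + 1))
      (Real.log (x + 1) + 1) x := by
    have hlog : HasDerivAt (fun y : ℝ => Real.log (y + 1)) (x + 1)⁻¹ x := by
      have := (Real.hasDerivAt_log (by linarith : x + 1 ≠ 0)).comp x
        ((hasDerivAt_id x).add_const 1)
      exact this.congr_deriv (by simp)
    have := ((hasDerivAt_id x).add_const 1).mul hlog
    refine this.congr_deriv ?_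
    field_simp
    simp only [id]; ring
  have h2 : HasDerivAt (fun y : ℝ => y * Real.log y) (Real.log x + 1) x := by
    have := (hasDerivAt_id x).mul (Real.hasDerivAt_log hx.ne')
    refine this.congr_deriv ?_
    field_simp
    simp only [id]; ring
  have := h1.sub h2
  refine this.congr_deriv ?_
  ring

lemma log_one_add_inv {x : ℝ} (hx : 0 < x) :
    Real.log (1 + 1 / x) = Real.log (x + 1) - Real.log x := by
  rw [show (1 : ℝ) + 1 / x = (x + 1) / x by field_simp,
    Real.log_div (by linarith) hx.ne']

/-- derivative, sign of derivative, and positivity of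
`λ(B) = C(B−B_c) log(1+1/C) − 2(f(BC) − f(B_c C))` for `B > B_c`. -/
theorem statement16 (C Bc : ℝ) (lam : ℝ → ℝ) (hC : 0 < C)
    (hBc : Bc = 1 + Real.sqrt (1 + 1 / C))
    (hlam : lam = fun B : ℝ =>
      C * (B - Bc) * Real.log (1 + 1 / C) - 2 * (f (B * C) - f (Bc * C))) :
    (∀ B : ℝ, 0 < B →
      HasDerivAt lam
        (C * Real.log (1 + 1 / C) - 2 * C * Real.log (1 + 1 / (B * C))) B) ∧
    (∀ B : ℝ, 0 < B →
      (0 < C * Real.log (1 + 1 / C) - 2 * C * Real.log (1 + 1 / (B * C)) ↔ Bc < B)) ∧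
    lam Bc = 0 ∧
    (∀ B : ℝ, Bc < B → 0 < lam B) := by
  have hs : (1:ℝ) < Real.sqrt (1 + 1 / C) := by
    have h1 := one_div_pos.mpr hC
    nlinarith [Real.sq_sqrt (show (0:ℝ) ≤ 1 + 1 / C by linarith),
      Real.sqrt_nonneg (1 + 1 / C)]
  set s := Real.sqrt (1 + 1 / C) with hsdef
  have hs0 : 0 < s := by linarith
  have hssq : s ^ 2 = 1 + 1 / C := Real.sq_sqrt (by positivity)
  have hBc0 : 0 < Bc := by rw [hBc]; linarith
  have hBcC : Bc * C = C * (s + 1) := by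
    rw [hBc]; ring
  have hs1 : 0 < s - 1 := by linarith
  have hCs : C * (s + 1) = 1 / (s - 1) := by
    rw [eq_div_iff hs1.ne']
    have h := hssq
    field_simp at h
    nlinarith [h]
  -- derivative
  have hderiv : ∀ B : ℝ, 0 < B →
      HasDerivAt lam
        (C * Real.log (1 + 1 / C) - 2 * C * Real.log (1 + 1 / (B * C))) B := by
    intro B hB
    have hBC : 0 < B * C := mul_pos hB hC
    have hf : HasDerivAt (fun x : ℝ => f (x * C))
        ((Real.log (B * C + 1) - Real.log (B * C)) * C) B := by
      have := (f_hasDerivAt hBC).comp B ((hasDerivAt_id B).mul_const C)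
      exact this.congr_deriv (by simp)
    have h1 : HasDerivAt (fun x : ℝ => C * (x - Bc) * Real.log (1 + 1 / C))
        (C * Real.log (1 + 1 / C)) B := by
      have := (((hasDerivAt_id B).sub_const Bc).const_mul C).mul_const
        (Real.log (1 + 1 / C))
      simpa [mul_comm, mul_assoc] using this
    have h2 := (hf.sub_const (f (Bc * C))).const_mul 2
    have := h1.sub h2
    rw [hlam]
    refine this.congr_deriv ?_
    rw [log_one_add_inv hBC]
    ring
  -- sign of the derivative
  have hsign : ∀ B : ℝ, 0 < B →
      (0 < C * Real.log (1 + 1 / C) - 2 * C * Real.log (1 + 1 / (B * C)) ↔ Bc < B) := by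
    intro B hB
    have hBC : 0 < B * C := mul_pos hB hC
    have hM0 : (0:ℝ) < 1 + 1 / (B * C) := by positivity
    have hL : Real.log (1 + 1 / C) = 2 * Real.log s := by
      rw [← hssq, Real.log_pow]; push_cast; ring
    constructor
    · intro h
      have h2 : Real.log (1 + 1 / (B * C)) < Real.log s := by
        rw [hL] at h; nlinarith
      have h3 : 1 + 1 / (B * C) < s := by
        have := (Real.log_lt_log_iff hM0 hs0).mp h2
        exact this
      have h4 : 1 < B * C * (s - 1) := by
        have h5 : 1 / (B * C) < s - 1 := by linarith
        calc 1 = B * C * (1 / (B * C)) := by field_simp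
        _ < B * C * (s - 1) := by exact mul_lt_mul_of_pos_left h5 hBC
      -- B*C > 1/(s-1) = C*(s+1) = Bc*C
      have hkey : Bc * C < B * C := by
        rw [hBcC, hCs]
        exact (div_lt_iff₀ hs1).mpr (by linarith)
      exact lt_of_mul_lt_mul_right hkey hC.le
    · intro h
      have hkey : Bc * C < B * C := by
        exact mul_lt_mul_of_pos_right h hC
      have h4 : 1 < B * C * (s - 1) := by
        rw [hBcC, hCs] at hkey
        have := (div_lt_iff₀ hs1).mp hkey
        linarith
      have h3 : 1 + 1 / (B * C) < s := by
        have h5 : 1 / (B * C) < s - 1 := by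
          rw [div_lt_iff₀ hBC]; nlinarith
        linarith
      have h2 : Real.log (1 + 1 / (B * C)) < Real.log s :=
        Real.log_lt_log hM0 h3
      rw [hL]
      nlinarith
  have hzero : lam Bc = 0 := by rw [hlam]; simp
  refine ⟨hderiv, hsign, hzero, ?_⟩
  intro B hB
  have hmono : StrictMonoOn lam (Set.Ici Bc) := by
    apply strictMonoOn_of_deriv_pos (convex_Ici Bc)
    · intro x hx
      exact ((hderiv x (lt_of_lt_of_le hBc0 hx)).differentiableAt.continuousAt).continuousWithinAt
    · intro x hx
      rw [interior_Ici] at hx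
      have hx0 : 0 < x := lt_trans hBc0 hx
      rw [(hderiv x hx0).deriv]
      exact (hsign x hx0).mpr hx
  have := hmono (Set.self_mem_Ici) (Set.mem_Ici.mpr hB.le) hB
  rwa [hzero] at this
end

section
/- Fix C > 0 and set B_c := 1+√(1+1/C). The function h(B) := 2f(BC) − BC·log(1+1/C) on (0,∞) attains its strict global maximum at B = B_c: for every B > 0 with B ≠ B_c, h(B) < h(B_c). -/
open Real Filter Topology

noncomputable def hfun (L x : ℝ) : ℝ := 2 * f x - x * L

lemma hfun_hasDerivAt (L x : ℝ) (hx : 0 < x) :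
    HasDerivAt (hfun L) (2 * (Real.log (x + 1) - Real.log x) - L) x := by
  have hx1 : (0:ℝ) < x + 1 := by linarith
  have d1 : HasDerivAt (fun y : ℝ => y + 1) 1 x := (hasDerivAt_id x).add_const 1
  have d2 : HasDerivAt (fun y : ℝ => Real.log (y + 1)) ((x + 1)⁻¹ * 1) x :=
    by have := (Real.hasDerivAt_log hx1.ne').comp x d1; exact this
  have d3 : HasDerivAt (fun y : ℝ => (y + 1) * Real.log (y + 1))
      (1 * Real.log (x + 1) + (x + 1) * ((x + 1)⁻¹ * 1)) x := d1.mul d2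
  have d4 : HasDerivAt (fun y : ℝ => y * Real.log y)
      (1 * Real.log x + x * x⁻¹) x := (hasDerivAt_id x).mul (Real.hasDerivAt_log hx.ne')
  have d5 := ((d3.sub d4).const_mul 2).sub ((hasDerivAt_id x).mul_const L)
  have h1 : x * x⁻¹ = 1 := mul_inv_cancel₀ hx.ne'
  have h2 : (x + 1) * ((x + 1)⁻¹ * 1) = 1 := by rw [mul_one]; exact mul_inv_cancel₀ hx1.ne'
  convert d5 using 1
  · rfl
  · rfl
  · rfl
  linear_combination 2 * h1 - 2 * h2

/-- `h(B) = 2f(BC) − BC log(1+1/C)` attains its strict global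
maximum on `(0,∞)` at `B = B_c = 1 + √(1+1/C)`. -/
theorem statement17 (C Bc : ℝ) (hC : 0 < C)
    (hBc : Bc = 1 + Real.sqrt (1 + 1 / C)) :
    ∀ B : ℝ, 0 < B → B ≠ Bc →
      2 * f (B * C) - B * C * Real.log (1 + 1 / C)
        < 2 * f (Bc * C) - Bc * C * Real.log (1 + 1 / C) := by
  intro B hB hne
  set s := Real.sqrt (1 + 1 / C) with hsdef
  have h1C : 0 < 1 / C := by positivity
  have hs2 : s * s = 1 + 1 / C := Real.mul_self_sqrt (by linarith)
  have hsnn : 0 ≤ s := Real.sqrt_nonneg _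
  have hs1 : 1 < s := by nlinarith
  set L := Real.log (1 + 1 / C) with hLdef
  have hL : L = 2 * Real.log s := by
    rw [hLdef, ← hs2, Real.log_mul (by linarith) (by linarith)]; ring
  set xc := Bc * C with hxc
  have hxc1 : xc * (s - 1) = 1 := by
    rw [hxc, hBc]
    have : C * (1 / C) = 1 := by field_simp
    nlinarith
  have hxcpos : 0 < xc := by nlinarith
  have mono : StrictMonoOn (hfun L) (Set.Ioc 0 xc) := by
    apply strictMonoOn_of_deriv_pos (convex_Ioc 0 xc)
    · intro x hx
      exact ((hfun_hasDerivAt L x hx.1).continuousAt).continuousWithinAt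
    · rw [interior_Ioc]
      intro x hx
      rw [(hfun_hasDerivAt L x hx.1).deriv]
      have hlog : Real.log s < Real.log (x + 1) - Real.log x := by
        rw [← Real.log_div (by linarith [hx.1] : (0:ℝ) < x + 1).ne' hx.1.ne']
        apply Real.log_lt_log (by linarith)
        rw [lt_div_iff₀ hx.1]
        nlinarith [hx.2, hx.1]
      linarith [hL]
  have anti : StrictAntiOn (hfun L) (Set.Ici xc) := by
    apply strictAntiOn_of_deriv_neg (convex_Ici xc)
    · intro x hx
      have hxpos : 0 < x := lt_of_lt_of_le hxcpos hx
      exact ((hfun_hasDerivAt L x hxpos).continuousAt).continuousWithinAt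
    · rw [interior_Ici]
      intro x hx
      have hxpos : 0 < x := lt_trans hxcpos hx
      rw [(hfun_hasDerivAt L x hxpos).deriv]
      have hlog : Real.log (x + 1) - Real.log x < Real.log s := by
        have hxgt : xc < x := hx
        rw [← Real.log_div (by linarith : (0:ℝ) < x + 1).ne' hxpos.ne']
        apply Real.log_lt_log (by positivity)
        rw [div_lt_iff₀ hxpos]
        nlinarith
      linarith [hL]
  have goal : hfun L (B * C) < hfun L xc := by
    rcases lt_or_gt_of_ne hne with h | h
    · have hlt : B * C < xc := by rw [hxc]; exact mul_lt_mul_of_pos_right h hC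
      exact mono ⟨by positivity, hlt.le⟩ ⟨hxcpos, le_refl _⟩ hlt
    · have hlt : xc < B * C := by rw [hxc]; exact mul_lt_mul_of_pos_right h hC
      exact anti (Set.self_mem_Ici) hlt.le hlt
  simpa [hfun, hxc] using goal
end
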